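/- arXiv:2303.16003 — 3 statements merged into one kernel-verified Lean document; each statement's English description precedes it below -/
import Mathlib

section
/- Let (X, ρ) be a compact metric space, let n be a positive integer, and equip X^n with the sup-metric ρ_∞((x_i),(y_i)) = max_i ρ(x_i, y_i). For every ε > 0, the ε-width dimension is subadditive: Widim_ε(X^{m+n}, ρ_∞) ≤ Widim_ε(X^m, ρ_∞) + Widim_ε(X^n, ρ_∞) for all positive integers m, n. -/
open Set Filter Topology ENNReal

def covDimLE (X : Type*) [TopologicalSpace X] (n : ℕ) : Prop :=
  ∀ (ι : Type) (U : ι → Set X), Finite ι → (∀ i, IsOpen (U i)) → (⋃ i, U i) = univ →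
    ∃ (κ : Type) (V : κ → Set X), Finite κ ∧ (∀ k, IsOpen (V k)) ∧ (⋃ k, V k) = univ ∧
      (∀ k, ∃ i, V k ⊆ U i) ∧ ∀ x : X, {k | x ∈ V k}.ncard ≤ n + 1

/-- The Lebesgue covering dimension of a topological space, valued in `ℕ∞`
(`⊤` means infinite-dimensional). -/
noncomputable def covDim (X : Type*) [TopologicalSpace X] : ℕ∞ :=
  sInf {m : ℕ∞ | ∃ n : ℕ, m = n ∧ covDimLE X n}

/-- `Widim_ε(X, ρ)`: the minimal covering dimension of a compact metrizable space `P`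
admitting a continuous `ε`-embedding `f : X → P` (i.e. `f x = f y → dist x y < ε`). -/
noncomputable def widim (X : Type*) (mX : MetricSpace X) (ε : ℝ) : ℕ∞ :=
  sInf {k : ℕ∞ | ∃ (P : Type) (_ : MetricSpace P) (_ : CompactSpace P)
    (f : X → P), @Continuous X P mX.toUniformSpace.toTopologicalSpace _ f ∧
      (∀ x y : X, f x = f y → @dist X mX.toDist x y < ε) ∧ covDim P = k}

/-! ### Auxiliary machinery -/

/-- A finite family of pairwise disjoint open sets, each contained in some member of `U`. -/
def DisjFam {X : Type} [TopologicalSpace X] {ι : Type} (U : ι → Set X) (F : Set (Set X)) : Prop :=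
  F.Finite ∧ (∀ A ∈ F, IsOpen A) ∧ F.Pairwise Disjoint ∧ ∀ A ∈ F, ∃ i, A ⊆ U i

lemma DisjFam.mono {X : Type} [TopologicalSpace X] {ι ι' : Type} {U : ι → Set X}
    {U' : ι' → Set X} {F : Set (Set X)} (h : DisjFam U F) (hUU' : ∀ i, ∃ i', U i ⊆ U' i') :
    DisjFam U' F := by
  refine ⟨h.1, h.2.1, h.2.2.1, fun A hA => ?_⟩
  obtain ⟨i, hi⟩ := h.2.2.2 A hA
  obtain ⟨i', hi'⟩ := hUU' i
  exact ⟨i', hi.trans hi'⟩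

/-- Regularization: an open family covering a closed set `C`, of order `≤ N` at points of `C`,
can be shrunk to an open family covering `C` of order `≤ N` everywhere. -/
lemma regularize {X : Type} [MetricSpace X] {κ : Type} [Finite κ]
    {W : κ → Set X} {C : Set X} (hC : IsClosed C) (hWo : ∀ t, IsOpen (W t))
    (hcov : C ⊆ ⋃ t, W t) (N : ℕ) (hord : ∀ x ∈ C, {t | x ∈ W t}.ncard ≤ N) :
    ∃ W' : κ → Set X, (∀ t, IsOpen (W' t)) ∧ (∀ t, W' t ⊆ W t) ∧ C ⊆ ⋃ t, W' t ∧
      ∀ x, {t | x ∈ W' t}.ncard ≤ N := by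
  have := Fintype.ofFinite κ
  obtain ⟨v, hvC, hvo, hvcl⟩ := exists_subset_iUnion_closure_subset hC hWo
    (fun x _ => Set.toFinite _) hcov
  set D : Set X := ⋃ T ∈ {T : Finset κ | T.card = N + 1}, ⋂ t ∈ T, closure (v t) with hD
  have hDclosed : IsClosed D := by
    refine Set.Finite.isClosed_biUnion (Set.toFinite _) (fun T _ => ?_)
    exact isClosed_biInter (fun t _ => isClosed_closure)
  refine ⟨fun t => v t ∩ Dᶜ, fun t => (hvo t).inter hDclosed.isOpen_compl,
    fun t => (inter_subset_left).trans ((subset_closure).trans (hvcl t)), ?_, ?_⟩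
  · intro x hx
    have hxD : x ∉ D := by
      intro hxD
      rw [hD, mem_iUnion₂] at hxD
      obtain ⟨T, hT, hxT⟩ := hxD
      have hsub : (T : Set κ) ⊆ {t | x ∈ W t} := by
        intro t ht
        exact hvcl t (by exact mem_iInter₂.1 hxT t ht)
      have h1 := Set.ncard_le_ncard hsub (Set.toFinite _)
      rw [Set.ncard_coe_finset] at h1
      have h2 := hord x hx
      have h3 : T.card = N + 1 := hT
      omega
    obtain ⟨t, ht⟩ := mem_iUnion.1 (hvC hx)
    exact mem_iUnion.2 ⟨t, ht, hxD⟩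
  · intro x
    by_contra hlt
    push_neg at hlt
    have hfin : {t | x ∈ v t ∩ Dᶜ}.Finite := Set.toFinite _
    obtain ⟨T, hTsub, hTcard⟩ := Finset.exists_subset_card_eq
      (s := hfin.toFinset) (n := N + 1)
      (by rw [← Set.ncard_eq_toFinset_card _ hfin]; omega)
    have hxD : x ∈ D := by
      rw [hD, mem_iUnion₂]
      refine ⟨T, hTcard, mem_iInter₂.2 fun t ht => ?_⟩
      have : x ∈ v t ∩ Dᶜ := hfin.mem_toFinset.1 (hTsub ht)
      exact subset_closure this.1
    obtain ⟨t₀, ht₀⟩ := Finset.card_pos.1 (by omega : 0 < T.card)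
    have : x ∈ v t₀ ∩ Dᶜ := hfin.mem_toFinset.1 (hTsub ht₀)
    exact this.2 hxD

/-- Decomposition: a cover (of a closed set `C`) of global order `≤ n+1` refines into `n+1`
disjoint open families. -/
lemma decomp {X : Type} [MetricSpace X] :
    ∀ (n : ℕ) {κ : Type} [Finite κ] (W : κ → Set X) (C : Set X), IsClosed C →
    (∀ t, IsOpen (W t)) → C ⊆ ⋃ t, W t → (∀ x, {t | x ∈ W t}.ncard ≤ n + 1) →
    ∃ G : Fin (n + 1) → Set (Set X), (∀ s, DisjFam W (G s)) ∧ C ⊆ ⋃ s, ⋃₀ G s := by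
  intro n
  induction n with
  | zero =>
    intro κ _ W C hC hWo hcov hord
    refine ⟨fun _ => Set.range W, fun s => ⟨Set.finite_range W, ?_, ?_, ?_⟩, ?_⟩
    · rintro A ⟨t, rfl⟩; exact hWo t
    · rintro A ⟨t, rfl⟩ B ⟨t', rfl⟩ hAB
      rw [Set.disjoint_left]
      intro a haA haB
      have ht : t ≠ t' := fun h => hAB (by rw [h])
      have hsub : ({t, t'} : Set κ) ⊆ {s | a ∈ W s} := by
        rintro s (rfl | rfl) <;> assumption
      have h1 := Set.ncard_le_ncard hsub (Set.toFinite _)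
      rw [Set.ncard_pair ht] at h1
      have h2 := hord a
      omega
    · rintro A ⟨t, rfl⟩; exact ⟨t, subset_rfl⟩
    · intro x hx
      obtain ⟨t, ht⟩ := mem_iUnion.1 (hcov hx)
      exact mem_iUnion.2 ⟨0, ⟨W t, ⟨t, rfl⟩, ht⟩⟩
  | succ n IH =>
    intro κ _ W C hC hWo hcov hord
    have := Fintype.ofFinite κ
    classical
    set ℋ : Set (Set X) := (fun T : Finset κ => ⋂ t ∈ T, W t) '' {T | T.card = n + 2} with hℋ
    have hHopen : ∀ A ∈ ℋ, IsOpen A := by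
      rintro A ⟨T, hT, rfl⟩
      exact isOpen_biInter_finset (fun t _ => hWo t)
    have hHdisj : DisjFam W ℋ := by
      refine ⟨Set.Finite.image _ (Set.toFinite _), hHopen, ?_, ?_⟩
      · rintro A ⟨T, hT, rfl⟩ B ⟨T', hT', rfl⟩ hAB
        rw [Set.disjoint_left]
        intro a haA haB
        have hTT' : T ≠ T' := fun h => hAB (by rw [h])
        have hsub : ((T ∪ T' : Finset κ) : Set κ) ⊆ {s | a ∈ W s} := by
          intro s hs
          rcases Finset.mem_union.1 hs with h | h
          · exact mem_iInter₂.1 haA s h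
          · exact mem_iInter₂.1 haB s h
        have h1 := Set.ncard_le_ncard hsub (Set.toFinite _)
        rw [Set.ncard_coe_finset] at h1
        have hTc : T.card = n + 2 := hT
        have hT'c : T'.card = n + 2 := hT'
        have hssub : T ⊂ T ∪ T' := by
          refine Finset.ssubset_iff_subset_ne.2 ⟨Finset.subset_union_left, ?_⟩
          intro h
          have hsub2 : T' ⊆ T := by
            rw [h]; exact Finset.subset_union_right
          exact hTT' (Finset.eq_of_subset_of_card_le hsub2 (by omega)).symm
        have hcard : n + 3 ≤ (T ∪ T').card := by
          have := Finset.card_lt_card hssub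
          omega
        have h2 := hord a
        omega
      · rintro A ⟨T, hT, rfl⟩
        have hTcard : T.card = n + 2 := hT
        obtain ⟨t, ht⟩ := Finset.card_pos.1 (by omega : 0 < T.card)
        exact ⟨t, biInter_subset_of_mem ht⟩
    set Z : Set X := C \ ⋃₀ ℋ with hZ
    have hZclosed : IsClosed Z := hC.sdiff (isOpen_sUnion hHopen)
    have hZord : ∀ x ∈ Z, {t | x ∈ W t}.ncard ≤ n + 1 := by
      intro x hx
      by_contra hlt
      push_neg at hlt
      have hle := hord x
      have heq : {t | x ∈ W t}.ncard = n + 2 := by omega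
      set T := (Set.toFinite {t | x ∈ W t}).toFinset with hT
      have hTcard : T.card = n + 2 := by
        rw [hT, ← Set.ncard_eq_toFinset_card _ (Set.toFinite _), heq]
      have hxH : x ∈ ⋃₀ ℋ := by
        refine ⟨⋂ t ∈ T, W t, ⟨T, hTcard, rfl⟩, mem_iInter₂.2 fun t ht => ?_⟩
        rw [hT, Set.Finite.mem_toFinset] at ht
        exact ht
      exact hx.2 hxH
    obtain ⟨W', hW'o, hW'sub, hW'cov, hW'ord⟩ :=
      regularize hZclosed hWo (hZ ▸ (diff_subset.trans hcov)) (n + 1) hZord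
    obtain ⟨G', hG'fam, hG'cov⟩ := IH W' Z hZclosed hW'o hW'cov hW'ord
    refine ⟨Fin.snoc G' ℋ, ?_, ?_⟩
    · intro s
      refine Fin.lastCases ?_ ?_ s
      · rw [Fin.snoc_last]; exact hHdisj
      · intro i
        rw [Fin.snoc_castSucc]
        exact (hG'fam i).mono (fun t => ⟨t, hW'sub t⟩)
    · intro x hx
      by_cases hxH : x ∈ ⋃₀ ℋ
      · exact mem_iUnion.2 ⟨Fin.last _, by rwa [Fin.snoc_last]⟩
      · obtain ⟨s, hs⟩ := mem_iUnion.1 (hG'cov ⟨hx, hxH⟩)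
        exact mem_iUnion.2 ⟨s.castSucc, by rwa [Fin.snoc_castSucc]⟩

/-- Kolmogorov–Ostrand style theorem: if `covDimLE X n` then every finite open cover admits,
for every `k ≥ n+1`, `k` disjoint open refining families such that every point is missed by
at most `n` of them. -/
lemma ostrand {X : Type} [MetricSpace X] {n : ℕ} (hdim : covDimLE X n)
    {ι : Type} [Finite ι] (U : ι → Set X) (hUo : ∀ i, IsOpen (U i)) (hUc : (⋃ i, U i) = univ) :
    ∀ k, n + 1 ≤ k → ∃ G : Fin k → Set (Set X), (∀ s, DisjFam U (G s)) ∧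
      ∀ x, {s | x ∉ ⋃₀ G s}.ncard ≤ n := by
  intro k hk
  induction k, hk using Nat.le_induction with
  | base =>
    obtain ⟨κ, V, hκ, hVo, hVc, hVref, hVord⟩ := hdim ι U inferInstance hUo hUc
    obtain ⟨G, hGfam, hGcov⟩ := decomp n V univ isClosed_univ hVo (by rw [hVc]) hVord
    refine ⟨G, fun s => (hGfam s).mono hVref, ?_⟩
    intro x
    obtain ⟨s₀, hs₀⟩ := mem_iUnion.1 (hGcov (mem_univ x))
    have hins : insert s₀ {s | x ∉ ⋃₀ G s} ⊆ univ := subset_univ _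
    have h1 := Set.ncard_le_ncard hins (Set.toFinite _)
    rw [Set.ncard_insert_of_notMem (by simpa using hs₀) (Set.toFinite _), Set.ncard_univ,
      Nat.card_eq_fintype_card, Fintype.card_fin] at h1
    omega
  | succ k hk IH =>
    obtain ⟨G, hGfam, hGdef⟩ := IH
    classical
    have hEo : ∀ s, IsOpen (⋃₀ G s) := fun s => isOpen_sUnion ((hGfam s).2.1)
    set B : Finset (Fin k) → Set X := fun S => ⋂ s ∈ S, (⋃₀ G s)ᶜ with hB
    have hBclosed : ∀ S, IsClosed (B S) :=
      fun S => isClosed_biInter (fun s _ => (hEo s).isClosed_compl)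
    have hBmiss : ∀ S x, x ∈ B S ↔ ∀ s ∈ S, x ∉ ⋃₀ G s := by
      intro S x; simp [hB]
    -- pairwise disjointness of the B S for distinct S of card n
    have hBdisj : ∀ S S' : Finset (Fin k), S.card = n → S'.card = n → S ≠ S' →
        ∀ x, x ∈ B S → x ∈ B S' → False := by
      intro S S' hS hS' hSS' x hx hx'
      have hsub : ((S ∪ S' : Finset (Fin k)) : Set (Fin k)) ⊆ {s | x ∉ ⋃₀ G s} := by
        intro s hs
        rcases Finset.mem_union.1 hs with h | h
        · exact (hBmiss S x).1 hx s h
        · exact (hBmiss S' x).1 hx' s h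
      have h1 := Set.ncard_le_ncard hsub (Set.toFinite _)
      rw [Set.ncard_coe_finset] at h1
      have hssub : S ⊂ S ∪ S' := by
        refine Finset.ssubset_iff_subset_ne.2 ⟨Finset.subset_union_left, ?_⟩
        intro h
        have hsub2 : S' ⊆ S := by rw [h]; exact Finset.subset_union_right
        exact hSS' (Finset.eq_of_subset_of_card_le hsub2 (by omega)).symm
      have h2 := Finset.card_lt_card hssub
      have h3 := hGdef x
      omega
    set R : Finset (Fin k) → Set X := fun S => ⋃ S' ∈ {T : Finset (Fin k) | T.card = n ∧ T ≠ S}, B S'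
      with hR
    have hRclosed : ∀ S, IsClosed (R S) :=
      fun S => Set.Finite.isClosed_biUnion (Set.toFinite _) (fun S' _ => hBclosed S')
    set USet : Finset (Fin k) → Set X :=
      fun S => {x | EMetric.infEdist x (B S) < EMetric.infEdist x (R S)} with hUSet
    have hUo' : ∀ S, IsOpen (USet S) :=
      fun S => isOpen_lt EMetric.continuous_infEdist EMetric.continuous_infEdist
    have hBU : ∀ S, S.card = n → B S ⊆ USet S := by
      intro S hS x hx
      have h0 : EMetric.infEdist x (B S) = 0 := EMetric.infEdist_zero_of_mem hx
      have hpos : 0 < EMetric.infEdist x (R S) := by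
        rw [pos_iff_ne_zero]
        intro h0'
        have hxcl : x ∈ closure (R S) := EMetric.mem_closure_iff_infEdist_zero.2 h0'
        rw [(hRclosed S).closure_eq] at hxcl
        obtain ⟨S', hS', hxS'⟩ := mem_iUnion₂.1 hxcl
        exact hBdisj S S' hS hS'.1 (Ne.symm hS'.2) x hx hxS'
      rw [hUSet, mem_setOf_eq, h0]; exact hpos
    have hUdisj : ∀ S S' : Finset (Fin k), S.card = n → S'.card = n → S ≠ S' →
        Disjoint (USet S) (USet S') := by
      intro S S' hS hS' hSS'
      rw [Set.disjoint_left]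
      intro x hx hx'
      have hsub1 : B S' ⊆ R S := by
        intro y hy; rw [hR]; exact mem_iUnion₂.2 ⟨S', ⟨hS', Ne.symm hSS'⟩, hy⟩
      have hsub2 : B S ⊆ R S' := by
        intro y hy; rw [hR]; exact mem_iUnion₂.2 ⟨S, ⟨hS, hSS'⟩, hy⟩
      have h1 : EMetric.infEdist x (R S) ≤ EMetric.infEdist x (B S') :=
        EMetric.infEdist_anti hsub1
      have h2 : EMetric.infEdist x (R S') ≤ EMetric.infEdist x (B S) :=
        EMetric.infEdist_anti hsub2
      have hxl : EMetric.infEdist x (B S) < EMetric.infEdist x (R S) := hx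
      have hxl' : EMetric.infEdist x (B S') < EMetric.infEdist x (R S') := hx'
      exact absurd (((hxl.trans_le h1).trans hxl').trans_le h2) (lt_irrefl _)
    -- choose for each S of card n an index outside S
    have hsel : ∀ S : Finset (Fin k), S.card = n → ∃ s, s ∉ S := by
      intro S hS
      by_contra h
      push_neg at h
      have : (Finset.univ : Finset (Fin k)) ⊆ S := fun s _ => h s
      have := Finset.card_le_card this
      simp [hS] at this
      omega
    set sel : Finset (Fin k) → Fin k := fun S =>
      if h : S.card = n then (hsel S h).choose else ⟨0, by omega⟩ with hselDef
    have hselspec : ∀ S : Finset (Fin k), (h : S.card = n) → sel S ∉ S := by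
      intro S h
      rw [hselDef]
      simp only [h, dif_pos]
      exact (hsel S h).choose_spec
    set Gnew : Set (Set X) :=
      ⋃ S ∈ {T : Finset (Fin k) | T.card = n}, (fun V => V ∩ USet S) '' (G (sel S)) with hGnew
    have hGnewfam : DisjFam U Gnew := by
      refine ⟨Set.Finite.biUnion (Set.toFinite _) (fun S _ => ((hGfam (sel S)).1).image _),
        ?_, ?_, ?_⟩
      · rintro A hA
        obtain ⟨S, hS, V, hV, rfl⟩ := by
          simpa only [hGnew, mem_iUnion₂, mem_image] using hA
        exact ((hGfam (sel S)).2.1 V hV).inter (hUo' S)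
      · intro A hA B hB hAB
        obtain ⟨S, hS, V, hV, rfl⟩ := by
          simpa only [hGnew, mem_iUnion₂, mem_image] using hA
        obtain ⟨S', hS', V', hV', rfl⟩ := by
          simpa only [hGnew, mem_iUnion₂, mem_image] using hB
        by_cases hSS' : S = S'
        · subst hSS'
          have hVV' : V ≠ V' := by
            intro h; exact hAB (by rw [h])
          exact Disjoint.mono inter_subset_left inter_subset_left
            ((hGfam (sel S)).2.2.1 hV hV' hVV')
        · exact Disjoint.mono inter_subset_right inter_subset_right
            (hUdisj S S' hS hS' hSS')
      · intro A hA
        obtain ⟨S, hS, V, hV, rfl⟩ := by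
          simpa only [hGnew, mem_iUnion₂, mem_image] using hA
        obtain ⟨i, hi⟩ := (hGfam (sel S)).2.2.2 V hV
        exact ⟨i, inter_subset_left.trans hi⟩
    refine ⟨Fin.snoc G Gnew, ?_, ?_⟩
    · intro s
      refine Fin.lastCases ?_ ?_ s
      · rw [Fin.snoc_last]; exact hGnewfam
      · intro i; rw [Fin.snoc_castSucc]; exact hGfam i
    · intro x
      set M : Set (Fin k) := {s | x ∉ ⋃₀ G s} with hM
      have hMdef := hGdef x
      rw [← hM] at hMdef
      have hMsub : {s : Fin (k+1) | x ∉ ⋃₀ (Fin.snoc (α := fun _ => Set (Set X)) G Gnew s)} ⊆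
          (Fin.castSucc '' M) ∪ {Fin.last k} := by
        intro s hs
        refine Fin.lastCases ?_ ?_ s hs
        · intro _; exact Or.inr rfl
        · intro i hi
          rw [mem_setOf_eq, Fin.snoc_castSucc] at hi
          exact Or.inl ⟨i, hi, rfl⟩
      by_cases hn : M.ncard = n
      · -- x is covered by the new family
        have hxnew : x ∈ ⋃₀ Gnew := by
          set S₀ : Finset (Fin k) := (Set.toFinite M).toFinset with hS₀
          have hS₀card : S₀.card = n := by
            rw [hS₀, ← Set.ncard_eq_toFinset_card _ (Set.toFinite M), hn]
          have hxB : x ∈ B S₀ := by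
            rw [hBmiss]
            intro s hs
            rw [hS₀, Set.Finite.mem_toFinset] at hs
            exact hs
          have hxU : x ∈ USet S₀ := hBU S₀ hS₀card hxB
          have hselx : sel S₀ ∉ S₀ := hselspec S₀ hS₀card
          have hxE : x ∈ ⋃₀ G (sel S₀) := by
            by_contra hxe
            exact hselx (by rw [hS₀, Set.Finite.mem_toFinset]; exact hxe)
          obtain ⟨V, hV, hxV⟩ := hxE
          exact ⟨V ∩ USet S₀, mem_iUnion₂.2 ⟨S₀, hS₀card, ⟨V, hV, rfl⟩⟩, hxV, hxU⟩
        have hMsub' : {s : Fin (k+1) | x ∉ ⋃₀ (Fin.snoc (α := fun _ => Set (Set X)) G Gnew s)} ⊆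
            Fin.castSucc '' M := by
          intro s hs
          rcases hMsub hs with h | h
          · exact h
          · exfalso
            rw [mem_singleton_iff] at h
            subst h
            rw [mem_setOf_eq, Fin.snoc_last] at hs
            exact hs hxnew
        have h1 := Set.ncard_le_ncard hMsub' (Set.toFinite _)
        rw [Set.ncard_image_of_injective _ (Fin.castSucc_injective k)] at h1
        omega
      · have h1 := Set.ncard_le_ncard hMsub (Set.toFinite _)
        have h2 := Set.ncard_union_le (Fin.castSucc '' M) {Fin.last k}
        rw [Set.ncard_image_of_injective _ (Fin.castSucc_injective k),
          Set.ncard_singleton] at h2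
        omega

/-- Product theorem for covering dimension, for compact metric spaces. -/
lemma covDimLE_prod {P Q : Type} [MetricSpace P] [MetricSpace Q]
    [CompactSpace P] [CompactSpace Q] {p q : ℕ} (hp : covDimLE P p) (hq : covDimLE Q q) :
    covDimLE (P × Q) (p + q) := by
  intro ι U hι hUo hUc
  by_cases hne : Nonempty (P × Q)
  case neg =>
    refine ⟨PEmpty, fun _ => ∅, inferInstance, fun k => isOpen_empty, ?_, fun k => k.elim, ?_⟩
    · rw [Set.univ_eq_empty_iff.2 (not_nonempty_iff.1 hne)]
      simp
    · intro x
      exact ((not_nonempty_iff.1 hne).false x).elim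
  obtain ⟨z₀⟩ := hne
  have hz₀ : z₀ ∈ ⋃ i, U i := hUc ▸ mem_univ z₀
  obtain ⟨i₀, hi₀⟩ := mem_iUnion.1 hz₀
  -- Lebesgue number
  obtain ⟨δ, hδ, hleb⟩ := lebesgue_number_lemma_of_metric isCompact_univ hUo (by rw [hUc])
  have hδ4 : 0 < δ / 4 := by linarith
  -- finite ball covers of P and Q
  obtain ⟨sP, hsP⟩ := IsCompact.elim_finite_subcover (isCompact_univ (X := P))
    (fun a : P => Metric.ball a (δ / 4)) (fun a => Metric.isOpen_ball)
    (fun a _ => mem_iUnion.2 ⟨a, Metric.mem_ball_self hδ4⟩)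
  obtain ⟨sQ, hsQ⟩ := IsCompact.elim_finite_subcover (isCompact_univ (X := Q))
    (fun b : Q => Metric.ball b (δ / 4)) (fun b => Metric.isOpen_ball)
    (fun b _ => mem_iUnion.2 ⟨b, Metric.mem_ball_self hδ4⟩)
  have hPcov : (⋃ a : ↥sP, Metric.ball (a : P) (δ / 4)) = univ := by
    apply eq_univ_of_univ_subset
    intro a ha
    obtain ⟨a₀, ha₀, hba⟩ := mem_iUnion₂.1 (hsP ha)
    exact mem_iUnion.2 ⟨⟨a₀, ha₀⟩, hba⟩
  have hQcov : (⋃ b : ↥sQ, Metric.ball (b : Q) (δ / 4)) = univ := by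
    apply eq_univ_of_univ_subset
    intro b hb
    obtain ⟨b₀, hb₀, hbb⟩ := mem_iUnion₂.1 (hsQ hb)
    exact mem_iUnion.2 ⟨⟨b₀, hb₀⟩, hbb⟩
  obtain ⟨GP, hGPfam, hGPdef⟩ := ostrand hp (fun a : ↥sP => Metric.ball (a : P) (δ / 4))
    (fun _ => Metric.isOpen_ball) hPcov (p + q + 1) (by omega)
  obtain ⟨GQ, hGQfam, hGQdef⟩ := ostrand hq (fun b : ↥sQ => Metric.ball (b : Q) (δ / 4))
    (fun _ => Metric.isOpen_ball) hQcov (p + q + 1) (by omega)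
  haveI : ∀ s : Fin (p + q + 1), Finite ↥(GP s) := fun s => (hGPfam s).1.to_subtype
  haveI : ∀ s : Fin (p + q + 1), Finite ↥(GQ s) := fun s => (hGQfam s).1.to_subtype
  refine ⟨Σ s : Fin (p + q + 1), ↥(GP s) × ↥(GQ s),
    fun c => (c.2.1 : Set P) ×ˢ (c.2.2 : Set Q), inferInstance, ?_, ?_, ?_, ?_⟩
  · rintro ⟨s, A, B⟩
    exact ((hGPfam s).2.1 A A.2).prod ((hGQfam s).2.1 B B.2)
  · apply eq_univ_of_univ_subset
    rintro ⟨a, b⟩ -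
    have h1 := hGPdef a
    have h2 := hGQdef b
    have hss : {s | a ∉ ⋃₀ GP s} ∪ {s | b ∉ ⋃₀ GQ s} ≠ univ := by
      intro h
      have := Set.ncard_union_le {s | a ∉ ⋃₀ GP s} {s | b ∉ ⋃₀ GQ s}
      rw [h, Set.ncard_univ, Nat.card_eq_fintype_card, Fintype.card_fin] at this
      omega
    obtain ⟨s, hs⟩ : ∃ s, s ∉ {s | a ∉ ⋃₀ GP s} ∪ {s | b ∉ ⋃₀ GQ s} := by
      by_contra h
      push_neg at h
      exact hss (eq_univ_of_forall h)
    rw [mem_union, not_or, mem_setOf_eq, mem_setOf_eq, not_not, not_not] at hs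
    obtain ⟨⟨A, hA, haA⟩, ⟨B, hB, hbB⟩⟩ := hs
    exact mem_iUnion.2 ⟨⟨s, ⟨A, hA⟩, ⟨B, hB⟩⟩, mk_mem_prod haA hbB⟩
  · rintro ⟨s, A, B⟩
    obtain ⟨a₀, hA⟩ := (hGPfam s).2.2.2 A A.2
    obtain ⟨b₀, hB⟩ := (hGQfam s).2.2.2 B B.2
    by_cases hAB : ((A : Set P) ×ˢ (B : Set Q)).Nonempty
    case neg =>
      refine ⟨i₀, ?_⟩
      show (A : Set P) ×ˢ (B : Set Q) ⊆ U i₀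
      rw [not_nonempty_iff_eq_empty.1 hAB]
      exact empty_subset _
    obtain ⟨⟨a₁, b₁⟩, ha₁, hb₁⟩ := hAB
    obtain ⟨i, hi⟩ := hleb (a₁, b₁) (mem_univ _)
    refine ⟨i, Subset.trans ?_ hi⟩
    rintro ⟨a₂, b₂⟩ ⟨ha₂, hb₂⟩
    have d1 : dist a₂ a₁ < δ / 2 := by
      have e1 : dist a₂ (a₀ : P) < δ / 4 := hA ha₂
      have e2 : dist a₁ (a₀ : P) < δ / 4 := hA ha₁
      calc dist a₂ a₁ ≤ dist a₂ (a₀ : P) + dist a₁ (a₀ : P) := dist_triangle_right _ _ _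
        _ < δ / 2 := by linarith
    have d2 : dist b₂ b₁ < δ / 2 := by
      have e1 : dist b₂ (b₀ : Q) < δ / 4 := hB hb₂
      have e2 : dist b₁ (b₀ : Q) < δ / 4 := hB hb₁
      calc dist b₂ b₁ ≤ dist b₂ (b₀ : Q) + dist b₁ (b₀ : Q) := dist_triangle_right _ _ _
        _ < δ / 2 := by linarith
    rw [Metric.mem_ball, Prod.dist_eq]
    exact max_lt (by linarith) (by linarith)
  · rintro ⟨a, b⟩
    have key : ∀ (T : Set (Σ s : Fin (p + q + 1), ↥(GP s) × ↥(GQ s))),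
        (∀ c ∈ T, (a, b) ∈ (c.2.1 : Set P) ×ˢ (c.2.2 : Set Q)) → T.ncard ≤ p + q + 1 := by
      intro T hT
      rw [← Nat.card_coe_set_eq]
      have hinj : Function.Injective (fun c : ↥T => (c : Σ s : Fin (p + q + 1),
          ↥(GP s) × ↥(GQ s)).1) := by
        rintro ⟨⟨s, A, B⟩, hc⟩ ⟨⟨s', A', B'⟩, hc'⟩ h
        have hss : s = s' := h
        subst hss
        obtain ⟨haA, hbB⟩ := hT _ hc
        obtain ⟨haA', hbB'⟩ := hT _ hc'
        have hAA : A = A' := by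
          refine Subtype.ext ?_
          by_contra hne'
          exact Set.disjoint_left.1 ((hGPfam s).2.2.1 A.2 A'.2
            hne') haA haA'
        have hBB : B = B' := by
          refine Subtype.ext ?_
          by_contra hne'
          exact Set.disjoint_left.1 ((hGQfam s).2.2.1 B.2 B'.2
            hne') hbB hbB'
        subst hAA
        subst hBB
        rfl
      calc Nat.card ↥T ≤ Nat.card (Fin (p + q + 1)) :=
            Nat.card_le_card_of_injective _ hinj
        _ = p + q + 1 := by simp
    exact key _ (fun c hc => hc)

lemma covDim_le_of {X : Type} [TopologicalSpace X] {n : ℕ} (h : covDimLE X n) :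
    covDim X ≤ (n : ℕ∞) :=
  sInf_le ⟨n, rfl, h⟩

lemma enat_sInf_mem {S : Set ℕ∞} (hS : S.Nonempty) : sInf S ∈ S ∧ ∀ b ∈ S, sInf S ≤ b := by
  obtain ⟨t, htS, hmin⟩ := (wellFounded_lt (α := ℕ∞)).has_min S hS
  have h1 : sInf S = t := le_antisymm (sInf_le htS) (le_sInf fun b hb => not_lt.1 (hmin b hb))
  exact ⟨h1 ▸ htS, fun b hb => h1 ▸ not_lt.1 (hmin b hb)⟩

/-- The infimum in `widim` is attained with a finite minimal covering-dimension witness. -/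
lemma widim_attained (X : Type) (mX : MetricSpace X) (ε : ℝ) (h : widim X mX ε ≠ ⊤) :
    ∃ (P : Type) (mP : MetricSpace P) (_ : CompactSpace P) (f : X → P) (p : ℕ),
      @Continuous X P mX.toUniformSpace.toTopologicalSpace
        mP.toUniformSpace.toTopologicalSpace f ∧
      (∀ x y : X, f x = f y → @dist X mX.toDist x y < ε) ∧
      covDimLE P p ∧ (p : ℕ∞) ≤ widim X mX ε := by
  have hSne : {k : ℕ∞ | ∃ (P : Type) (_ : MetricSpace P) (_ : CompactSpace P)
      (f : X → P), @Continuous X P mX.toUniformSpace.toTopologicalSpace _ f ∧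
      (∀ x y : X, f x = f y → @dist X mX.toDist x y < ε) ∧ covDim P = k}.Nonempty := by
    by_contra hne
    rw [Set.not_nonempty_iff_eq_empty] at hne
    rw [widim, hne, sInf_empty] at h
    exact h rfl
  obtain ⟨hmem, _⟩ := enat_sInf_mem hSne
  obtain ⟨P, mP, cP, f, hfc, hfe, hPdim⟩ := hmem
  have hfin : covDim P ≠ ⊤ := by
    rw [hPdim]
    exact h
  have hTne : {m : ℕ∞ | ∃ n : ℕ, m = n ∧ covDimLE P n}.Nonempty := by
    by_contra hne
    rw [Set.not_nonempty_iff_eq_empty] at hne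
    rw [covDim, hne, sInf_empty] at hfin
    exact hfin rfl
  obtain ⟨hmem', _⟩ := enat_sInf_mem hTne
  obtain ⟨p, hpe, hple⟩ := hmem'
  refine ⟨P, mP, cP, f, p, hfc, hfe, hple, ?_⟩
  rw [← hpe]
  change covDim P ≤ _
  rw [hPdim]
  exact le_rfl

/-- subadditivity of `Widim_ε(X^n, ρ_∞)` in `n`, where `X^n` carries the
sup-metric (the product metric on `Fin n → X`). -/
theorem widim_pow_subadditive (X : Type) [MetricSpace X] [CompactSpace X]
    (ε : ℝ) (hε : 0 < ε) (m n : ℕ) (hm : 0 < m) (hn : 0 < n) :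
    widim (Fin (m + n) → X) inferInstance ε ≤
      widim (Fin m → X) inferInstance ε + widim (Fin n → X) inferInstance ε := by
  by_cases h1 : widim (Fin m → X) inferInstance ε = ⊤
  · rw [h1, top_add]; exact le_top
  by_cases h2 : widim (Fin n → X) inferInstance ε = ⊤
  · rw [h2, add_top]; exact le_top
  obtain ⟨P, mP, cP, f, p, hfc, hfe, hPdim, hple⟩ := widim_attained _ _ ε h1
  obtain ⟨Q, mQ, cQ, g, q, hgc, hge, hQdim, hqle⟩ := widim_attained _ _ ε h2
  have key : widim (Fin (m + n) → X) inferInstance ε ≤ ((p : ℕ∞) + (q : ℕ∞)) := by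
    have hmem : ((covDim (P × Q) : ℕ∞)) ∈ {k : ℕ∞ | ∃ (R : Type) (_ : MetricSpace R)
        (_ : CompactSpace R) (h : (Fin (m + n) → X) → R),
        @Continuous (Fin (m + n) → X) R _ _ h ∧
        (∀ x y, h x = h y → dist x y < ε) ∧ covDim R = covDim (P × Q)} := by
      refine ⟨P × Q, inferInstance, inferInstance,
        fun z => (f (fun i => z (Fin.castAdd n i)), g (fun j => z (Fin.natAdd m j))), ?_, ?_, rfl⟩
      · exact Continuous.prodMk
          (hfc.comp (continuous_pi fun i => continuous_apply _))
          (hgc.comp (continuous_pi fun j => continuous_apply _))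
      · intro x y hxy
        have h1 := hfe _ _ (congrArg Prod.fst hxy)
        have h2 := hge _ _ (congrArg Prod.snd hxy)
        rw [dist_pi_lt_iff hε]
        intro i
        refine Fin.addCases (fun j => ?_) (fun j => ?_) i
        · exact lt_of_le_of_lt
            (dist_le_pi_dist (fun i => x (Fin.castAdd n i)) (fun i => y (Fin.castAdd n i)) j) h1
        · exact lt_of_le_of_lt
            (dist_le_pi_dist (fun i => x (Fin.natAdd m i)) (fun i => y (Fin.natAdd m i)) j) h2
    calc widim (Fin (m + n) → X) inferInstance ε ≤ covDim (P × Q) := sInf_le hmem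
      _ ≤ ((p + q : ℕ) : ℕ∞) := covDim_le_of (covDimLE_prod hPdim hQdim)
      _ = (p : ℕ∞) + (q : ℕ∞) := by push_cast; rfl
  exact key.trans (add_le_add hple hqle)
end

section
/- Let (X, ρ) be a compact metric space. Then dim(X) = lim_{ε→0⁺} Widim_ε(X, ρ), where dim denotes the Lebesgue covering dimension. -/
open Set Filter Topology ENNReal

section Aux

open Metric

/-- `widim` is antitone in `ε`. -/
lemma widim_antitone (X : Type) [MetricSpace X] {ε ε' : ℝ} (h : ε ≤ ε') :
    widim X inferInstance ε' ≤ widim X inferInstance ε := by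
  apply sInf_le_sInf
  rintro k ⟨P, mP, cP, f, hf, he, hd⟩
  exact ⟨P, mP, cP, f, hf, fun x y hxy => (he x y hxy).trans_le h, hd⟩

/-- `widim ε ≤ covDim X` for every `ε > 0` (take `P = X`, `f = id`). -/
lemma widim_le_covDim (X : Type) [MetricSpace X] [CompactSpace X] {ε : ℝ} (hε : 0 < ε) :
    widim X inferInstance ε ≤ covDim X := by
  apply sInf_le
  refine ⟨X, inferInstance, inferInstance, id, continuous_id, fun x y h => ?_, rfl⟩
  cases h
  simpa using hε

/-- Uniform version of the `ε`-embedding condition, by compactness. -/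
lemma exists_delta {X P : Type} [MetricSpace X] [CompactSpace X] [MetricSpace P]
    {f : X → P} (hf : Continuous f) {δ : ℝ} (_hδ : 0 < δ)
    (he : ∀ x y : X, f x = f y → dist x y < δ) :
    ∃ δ' > 0, ∀ x y : X, dist (f x) (f y) < δ' → dist x y < δ := by
  set K : Set (X × X) := {p | δ ≤ dist p.1 p.2} with hK
  have hKcl : IsClosed K := isClosed_le continuous_const (continuous_fst.dist continuous_snd)
  have hKc : IsCompact K := hKcl.isCompact
  rcases K.eq_empty_or_nonempty with hKe | hKne
  · refine ⟨1, one_pos, fun x y _ => ?_⟩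
    by_contra hc
    have : (x, y) ∈ K := not_lt.mp hc
    rw [hKe] at this
    exact this
  · have hcont : ContinuousOn (fun p : X × X => dist (f p.1) (f p.2)) K :=
      ((hf.comp continuous_fst).dist (hf.comp continuous_snd)).continuousOn
    obtain ⟨p₀, hp₀, hmin⟩ := hKc.exists_isMinOn hKne hcont
    refine ⟨dist (f p₀.1) (f p₀.2), ?_, ?_⟩
    · rcases (dist_nonneg : (0:ℝ) ≤ dist (f p₀.1) (f p₀.2)).lt_or_eq with h | h
      · exact h
      · exfalso
        have : f p₀.1 = f p₀.2 := dist_le_zero.mp h.ge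
        exact absurd hp₀ (not_le.mpr (he _ _ this))
    · intro x y hxy
      by_contra hc
      have hmem : (x, y) ∈ K := not_lt.mp hc
      exact absurd (hmin hmem) (not_le.mpr hxy)

/-- The key direction: if `widim ε ≤ k` for all `ε > 0`, then `covDim X ≤ k`. -/
lemma covDim_le_of_widim (X : Type) [MetricSpace X] [CompactSpace X] (k : ℕ)
    (h : ∀ ε > (0:ℝ), widim X inferInstance ε ≤ (k : ℕ∞)) :
    covDim X ≤ (k : ℕ∞) := by
  have hle : covDimLE X k := by
    intro ι U hι hU hcov
    rcases isEmpty_or_nonempty ι with hιe | hιne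
    · refine ⟨ι, U, hι, hU, hcov, fun k => isEmptyElim k, fun x => ?_⟩
      have : {k : ι | x ∈ U k} = ∅ := eq_empty_of_isEmpty _
      simp [this]
    -- Lebesgue number
    obtain ⟨δ, hδ, hLeb⟩ := lebesgue_number_lemma_of_metric isCompact_univ hU (hcov ▸ subset_rfl)
    -- a witness for widim δ ≤ k
    have h1 : widim X inferInstance δ < (k : ℕ∞) + 1 :=
      lt_of_le_of_lt (h δ hδ) ((ENat.lt_add_one_iff (ENat.coe_ne_top k)).mpr le_rfl)
    rw [widim, sInf_lt_iff] at h1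
    obtain ⟨m, ⟨P, mP, cP, f, hf, he, hcd⟩, hmk⟩ := h1
    -- extract covDimLE P n with n ≤ k
    have h2 : covDim P < (k : ℕ∞) + 1 := hcd ▸ hmk
    rw [covDim, sInf_lt_iff] at h2
    obtain ⟨m', ⟨n, rfl, hPn⟩, hm'k⟩ := h2
    have hnk : n ≤ k := by
      have : (n : ℕ∞) ≤ (k : ℕ∞) := (ENat.lt_add_one_iff (ENat.coe_ne_top k)).mp hm'k
      exact_mod_cast this
    -- uniform delta
    obtain ⟨δ', hδ', hunif⟩ := exists_delta hf hδ he
    -- finite subcover of P by δ'/2-balls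
    have hδ'2 : 0 < δ' / 2 := by linarith
    obtain ⟨t, ht⟩ := isCompact_univ.elim_finite_subcover (fun p : P => ball p (δ' / 2))
      (fun p => isOpen_ball) (fun x _ => mem_iUnion.mpr ⟨x, mem_ball_self hδ'2⟩)
    -- apply covDimLE P n
    obtain ⟨κ, V, hκ, hVopen, hVcov, hVref, hVord⟩ :=
      hPn {p : P // p ∈ t} (fun p => ball p.1 (δ' / 2)) inferInstance (fun _ => isOpen_ball)
        (by
          apply eq_univ_of_univ_subset
          intro x hx
          obtain ⟨p, hp, hxp⟩ := mem_iUnion₂.mp (ht hx)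
          exact mem_iUnion.mpr ⟨⟨p, hp⟩, hxp⟩)
    refine ⟨κ, fun j => f ⁻¹' V j, hκ, fun j => (hVopen j).preimage hf, ?_, ?_, ?_⟩
    · rw [← preimage_iUnion, hVcov, preimage_univ]
    · intro j
      rcases (f ⁻¹' V j).eq_empty_or_nonempty with hje | ⟨x₀, hx₀⟩
      · refine ⟨Classical.arbitrary ι, ?_⟩
        show f ⁻¹' V j ⊆ U _
        rw [hje]
        exact empty_subset _
      · obtain ⟨i, hi⟩ := hLeb x₀ (mem_univ x₀)
        refine ⟨i, fun y hy => hi ?_⟩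
        obtain ⟨p, hpV⟩ := hVref j
        have hyp : f y ∈ ball p.1 (δ' / 2) := hpV hy
        have hx₀p : f x₀ ∈ ball p.1 (δ' / 2) := hpV hx₀
        have : dist (f y) (f x₀) < δ' := by
          calc dist (f y) (f x₀) ≤ dist (f y) p.1 + dist p.1 (f x₀) := dist_triangle _ _ _
            _ < δ' / 2 + δ' / 2 := by
                rw [mem_ball] at hyp hx₀p
                rw [dist_comm p.1 (f x₀)]
                exact add_lt_add hyp hx₀p
            _ = δ' := by ring
        exact mem_ball.mpr (hunif y x₀ this)
    · intro x
      have : {j : κ | x ∈ f ⁻¹' V j} = {j : κ | f x ∈ V j} := rfl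
      rw [this]
      exact le_trans (hVord (f x)) (by omega)
  exact sInf_le ⟨k, rfl, hle⟩

end Aux

/-- for a compact metric space, `dim(X) = lim_{ε→0⁺} Widim_ε(X, ρ)`. -/
theorem covDim_eq_limit_widim (X : Type) [MetricSpace X] [CompactSpace X] :
    Filter.Tendsto (fun ε : ℝ => ((widim X inferInstance ε : ℝ≥0∞)))
      (nhdsWithin 0 (Set.Ioi 0)) (nhds ((covDim X : ℝ≥0∞))) := by
  rcases eq_or_ne (covDim X) ⊤ with hc | hc
  · rw [hc]
    rw [ENat.toENNReal_top, ENNReal.tendsto_nhds_top_iff_nat]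
    intro m
    have hno : ¬ ∀ ε > (0:ℝ), widim X inferInstance ε ≤ (m : ℕ∞) := by
      intro hh
      have := covDim_le_of_widim X m hh
      rw [hc] at this
      exact absurd this (by simp)
    push_neg at hno
    obtain ⟨ε, hε, hlt⟩ := hno
    filter_upwards [Ioo_mem_nhdsGT_of_mem ⟨le_refl (0:ℝ), hε⟩] with x hx
    have h1 : (m : ℕ∞) < widim X inferInstance x :=
      lt_of_lt_of_le hlt (widim_antitone X hx.2.le)
    have := ENat.toENNReal_lt.mpr h1
    rwa [ENat.toENNReal_coe] at this
  · obtain ⟨k, hk⟩ : ∃ k : ℕ, (k : ℕ∞) = covDim X := ⟨(covDim X).toNat, ENat.coe_toNat hc⟩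
    obtain ⟨ε₀, hε₀, heq⟩ : ∃ ε₀ > (0:ℝ), widim X inferInstance ε₀ = covDim X := by
      by_contra hno
      push_neg at hno
      have hlt : ∀ ε > (0:ℝ), widim X inferInstance ε < covDim X := fun ε hε =>
        lt_of_le_of_ne (widim_le_covDim X hε) (hno ε hε)
      cases k with
      | zero =>
        have h1 := hlt 1 one_pos
        rw [← hk] at h1
        exact absurd h1 (by simp)
      | succ m =>
        have hb : covDim X ≤ (m : ℕ∞) := by
          apply covDim_le_of_widim
          intro ε hε
          have h3 := hlt ε hε
          rw [← hk] at h3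
          push_cast at h3
          exact (ENat.lt_add_one_iff (ENat.coe_ne_top m)).mp h3
        rw [← hk] at hb
        have h4 : (m + 1 : ℕ) ≤ m := by exact_mod_cast hb
        omega
    apply Tendsto.congr' _ tendsto_const_nhds
    filter_upwards [Ioo_mem_nhdsGT_of_mem ⟨le_refl (0:ℝ), hε₀⟩] with ε hε
    have h1 : widim X inferInstance ε₀ ≤ widim X inferInstance ε := widim_antitone X hε.2.le
    have h2 : widim X inferInstance ε ≤ covDim X := widim_le_covDim X hε.1
    rw [le_antisymm h2 (heq ▸ h1)]
end

section
/- Let (X, ρ) be a compact metric space with diameter ≤ 1. Equip X^ℤ with the metric D(x, y) = Σ_{i∈ℤ} ρ(x_i, y_i)/2^{|i|} and let σ denote the shift. For n ≥ 1 let D_{(n)}(x, y) = max_{0≤j≤n-1} D(σ^j x, σ^j y). Fix a point p ∈ X and define f_n : X^n → X^ℤ by sending (x_0,…,x_{n-1}) to the bi-infinite sequence equal to x_i in coordinates 0 ≤ i ≤ n−1 and equal to p elsewhere. Then f_n is continuous and distance-increasing from (X^n, ρ_∞) to (X^ℤ, D_{(n)}): ρ_∞(u, v) ≤ D_{(n)}(f_n(u),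 f_n(v)) for all u, v ∈ X^n. Consequently Widim_ε(X^n, ρ_∞) ≤ Widim_ε(X^ℤ, D_{(n)}) for every ε > 0. -/
open Set Filter Topology ENNReal

/-- The map `f_n : X^n → X^ℤ` placing `u` in coordinates `0, …, n−1` and the base point `p`
elsewhere. -/
noncomputable def extendSeq (X : Type) (p : X) (n : ℕ) (u : Fin n → X) : ℤ → X :=
  fun i => if h : 0 ≤ i ∧ i < n then u ⟨i.toNat, by omega⟩ else p

lemma summable_half_aux : Summable (fun i : ℤ => ((1:ℝ)/2) ^ i.natAbs) := by
  apply Summable.of_nat_of_neg <;>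
  · simpa using summable_geometric_of_lt_one (by norm_num : (0:ℝ) ≤ 1/2) (by norm_num)

lemma div_pow_abs_aux (d : ℝ) (i : ℤ) : d / (2:ℝ) ^ |i| = d * ((1:ℝ)/2) ^ i.natAbs := by
  rw [Int.abs_eq_natAbs, zpow_natCast, div_pow, one_pow, div_eq_mul_inv, one_div]

lemma cont_of_lip_aux {A : Type*} [MetricSpace A] {Y : Type*} [MetricSpace Y] (f : A → Y)
    (S : ℝ) (h : ∀ u v, dist (f u) (f v) ≤ S * dist u v) : Continuous f := by
  refine (LipschitzWith.of_dist_le_mul (K := S.toNNReal) fun u v => ?_).continuous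
  rw [Real.coe_toNNReal']
  exact (h u v).trans (mul_le_mul_of_nonneg_right (le_max_left _ _) dist_nonneg)

/-- `f_n` is continuous and distance-increasing from `(X^n, ρ_∞)` to
`(X^ℤ, D_{(n)})`, where `D_{(n)}(x,y) = max_{0≤j≤n-1} D(σ^j x, σ^j y)` and
`D(x,y) = Σ_i ρ(x_i,y_i)/2^{|i|}`; consequently
`Widim_ε(X^n, ρ_∞) ≤ Widim_ε(X^ℤ, D_{(n)})` for every `ε > 0`. -/
theorem extendSeq_distance_increasing (X : Type) [MetricSpace X] [CompactSpace X]
    (hdiam : ∀ x y : X, dist x y ≤ 1) (p : X) (n : ℕ) (hn : 0 < n)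
    (mDn : MetricSpace (ℤ → X))
    (hmDn : ∀ x y : ℤ → X, @dist _ mDn.toDist x y =
      ⨆ j : Fin n, ∑' i : ℤ, dist (x (i + (j : ℤ))) (y (i + (j : ℤ))) / 2 ^ |i|) :
    (@Continuous (Fin n → X) (ℤ → X) _ mDn.toUniformSpace.toTopologicalSpace
      (extendSeq X p n)) ∧
    (∀ u v : Fin n → X,
      dist u v ≤ @dist _ mDn.toDist (extendSeq X p n u) (extendSeq X p n v)) ∧
    (∀ ε : ℝ, 0 < ε →
      widim (Fin n → X) inferInstance ε ≤ widim (ℤ → X) mDn ε) := by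
  haveI : Nonempty (Fin n) := ⟨⟨0, hn⟩⟩
  have hval : ∀ (u : Fin n → X) (j : Fin n), extendSeq X p n u (j : ℤ) = u j := by
    intro u j
    have hc : (0:ℤ) ≤ (j:ℤ) ∧ (j:ℤ) < n := ⟨Int.ofNat_nonneg _, by exact_mod_cast j.isLt⟩
    simp only [extendSeq, dif_pos hc]
    exact congrArg u (Fin.ext (by simp))
  have hbound : ∀ u v : Fin n → X, ∀ k : ℤ,
      dist (extendSeq X p n u k) (extendSeq X p n v k) ≤ dist u v := by
    intro u v k
    by_cases h : 0 ≤ k ∧ k < n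
    · simp only [extendSeq, dif_pos h]
      exact dist_le_pi_dist u v _
    · simp only [extendSeq, dif_neg h, dist_self]
      exact dist_nonneg
  have hsum : ∀ u v : Fin n → X, ∀ j : Fin n,
      Summable (fun i : ℤ =>
        dist (extendSeq X p n u (i + (j:ℤ))) (extendSeq X p n v (i + (j:ℤ))) / 2 ^ |i|) := by
    intro u v j
    apply Summable.of_nonneg_of_le (fun i => by positivity) (fun i => ?_) summable_half_aux
    rw [div_pow_abs_aux]
    have := hdiam (extendSeq X p n u (i + (j:ℤ))) (extendSeq X p n v (i + (j:ℤ)))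
    nlinarith [pow_nonneg (by norm_num : (0:ℝ) ≤ 1/2) i.natAbs]
  set S : ℝ := ∑' i : ℤ, ((1:ℝ)/2) ^ i.natAbs with hS
  have hcont : @Continuous (Fin n → X) (ℤ → X) _ mDn.toUniformSpace.toTopologicalSpace
      (extendSeq X p n) := by
    refine @cont_of_lip_aux (Fin n → X) _ (ℤ → X) mDn (extendSeq X p n) S fun u v => ?_
    rw [hmDn]
    refine ciSup_le fun j => ?_
    have h1 : ∀ i : ℤ,
        dist (extendSeq X p n u (i + (j:ℤ))) (extendSeq X p n v (i + (j:ℤ))) / 2 ^ |i|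
          ≤ dist u v * ((1:ℝ)/2) ^ i.natAbs := by
      intro i
      rw [div_pow_abs_aux]
      exact mul_le_mul_of_nonneg_right (hbound u v _)
        (pow_nonneg (by norm_num) _)
    calc (∑' i : ℤ, dist (extendSeq X p n u (i + (j:ℤ)))
            (extendSeq X p n v (i + (j:ℤ))) / 2 ^ |i|)
        ≤ ∑' i : ℤ, dist u v * ((1:ℝ)/2) ^ i.natAbs :=
          Summable.tsum_le_tsum h1 (hsum u v j) (summable_half_aux.mul_left _)
      _ = dist u v * S := by rw [tsum_mul_left]
      _ = S * dist u v := mul_comm _ _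
  have hdi : ∀ u v : Fin n → X,
      dist u v ≤ @dist _ mDn.toDist (extendSeq X p n u) (extendSeq X p n v) := by
    intro u v
    rw [hmDn]
    have hnon : (0:ℝ) ≤ ⨆ j : Fin n, ∑' i : ℤ,
        dist (extendSeq X p n u (i + (j:ℤ))) (extendSeq X p n v (i + (j:ℤ))) / 2 ^ |i| := by
      refine le_ciSup_of_le (Set.Finite.bddAbove (Set.finite_range _)) ⟨0, hn⟩ ?_
      exact tsum_nonneg fun i => by positivity
    rw [dist_pi_le_iff hnon]
    intro j
    refine le_ciSup_of_le (Set.Finite.bddAbove (Set.finite_range _)) j ?_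
    have h0 : dist (u j) (v j) =
        dist (extendSeq X p n u ((0:ℤ) + (j:ℤ)))
          (extendSeq X p n v ((0:ℤ) + (j:ℤ))) / 2 ^ |(0:ℤ)| := by
      simp [hval]
    rw [h0]
    exact Summable.le_tsum (hsum u v j) 0 fun i _ => by positivity
  refine ⟨hcont, hdi, fun ε hε => ?_⟩
  apply sInf_le_sInf
  rintro k ⟨P, mP, cP, f, hf, hemb, hdim⟩
  exact ⟨P, mP, cP, f ∘ extendSeq X p n,
    @Continuous.comp (Fin n → X) (ℤ → X) P _ mDn.toUniformSpace.toTopologicalSpace _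
      (extendSeq X p n) f hf hcont,
    fun u v h => lt_of_le_of_lt (hdi u v) (hemb _ _ h), hdim⟩
end
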